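/- arXiv:2408.14223 — 2 statements merged into one kernel-verified Lean document; each statement's English description precedes it below -/
import Mathlib

section
/- Under the assumption that there exists a parameter θ such that y(k) − G_m(z) r̃(θ,k) ≡ 0 for all k, the FRIT model-matching error can be rewritten as a linear-in-parameters residual: y(k) − G_m(z) r̃(θ,k) equals a scalar multiple of φᵀ(k)θ − d(k), where φ(k) = β(z)(1 − G_m(z)) y(k) and d(k) = G_m(z) u(k), provided the controller has the form C(z,θ) = θᵀβ(z) and u(k) = C(z,θ)(r̃(θ,k) − y(k)). Consequently the A-FRIT evaluation function J(θ) = Σₖ (φᵀ(k)θ − d(k))² is a convex function of θ. -/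
private lemma convexOn_finset_sum {ι E : Type*} [AddCommGroup E] [Module ℝ E]
    (t : Finset ι) (f : ι → E → ℝ)
    (hf : ∀ k ∈ t, ConvexOn ℝ Set.univ (f k)) :
    ConvexOn ℝ Set.univ (fun x => ∑ k ∈ t, f k x) := by
  classical
  have h : ConvexOn ℝ Set.univ (∑ k ∈ t, f k) :=
    Finset.sum_induction f _ (fun a b ha hb => ha.add hb)
      (by simpa [Pi.zero_def] using convexOn_const (0 : ℝ) convex_univ) hf
  have he : (fun x => ∑ k ∈ t, f k x) = ∑ k ∈ t, f k := by
    funext x; simp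
  rwa [he]

/-- FRIT matching error as linear-in-parameters residual, and convexity. -/
theorem stmt_1 {n : ℕ}
    (β : Fin n → ((ℕ → ℝ) →ₗ[ℝ] (ℕ → ℝ)))
    (Gm : (ℕ → ℝ) →ₗ[ℝ] (ℕ → ℝ))
    (hcomm : ∀ i, Gm ∘ₗ β i = β i ∘ₗ Gm)
    (θ : Fin n → ℝ) (y u rt : ℕ → ℝ)
    -- u = C(z,θ)(r̃ − y) with C(z,θ) = θᵀβ(z)
    (hu : u = (∑ i, θ i • β i) (rt - y))
    -- assumption: exact matching y − G_m r̃ ≡ 0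
    (hmatch : y - Gm rt = 0)
    (φ : ℕ → Fin n → ℝ) (hφ : ∀ k i, φ k i = (β i) (y - Gm y) k)
    (d : ℕ → ℝ) (hd : ∀ k, d k = Gm u k) (N : ℕ) :
    (∀ k, (∑ i, φ k i * θ i) - d k
        = (∑ i, θ i • β i) (y - Gm rt) k) ∧
    ConvexOn ℝ Set.univ
      (fun θ' : Fin n → ℝ =>
        ∑ k ∈ Finset.range N, ((∑ i, φ k i * θ' i) - d k) ^ 2) := by
  have hGmrt : Gm rt = y := (sub_eq_zero.mp hmatch).symm
  constructor
  · intro k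
    have hrty : Gm (rt - y) = y - Gm y := by rw [map_sub, hGmrt]
    have h2 : ∀ i, Gm ((β i) (rt - y)) = (β i) (y - Gm y) := by
      intro i
      have h1 : Gm ((β i) (rt - y)) = (β i) (Gm (rt - y)) := by
        have := congrArg (fun f => f (rt - y)) (hcomm i)
        simpa using this
      rw [h1, hrty]
    have hGmu : Gm u = ∑ i, θ i • (β i) (y - Gm y) := by
      rw [hu]
      have hs : (∑ i, θ i • β i) (rt - y) = ∑ i, θ i • (β i) (rt - y) := by
        simp [LinearMap.sum_apply, LinearMap.smul_apply]
      rw [hs, map_sum]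
      exact Finset.sum_congr rfl fun i _ => by rw [map_smul, h2 i]
    have hd' : d k = ∑ i, θ i * φ k i := by
      rw [hd k, hGmu, Finset.sum_apply]
      exact Finset.sum_congr rfl fun i _ => by rw [Pi.smul_apply, smul_eq_mul, hφ]
    rw [hd', hmatch]
    simp only [map_zero]
    rw [← Finset.sum_sub_distrib, Finset.sum_eq_zero fun i _ => by ring]
    simp
  · apply convexOn_finset_sum
    intro k _
    have hsq : ConvexOn ℝ Set.univ (fun x : ℝ => x ^ 2) :=
      Even.convexOn_pow (by norm_num)
    let L : (Fin n → ℝ) →ₗ[ℝ] ℝ :=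
      { toFun := fun θ' => ∑ i, φ k i * θ' i
        map_add' := by intro a b; simp [mul_add, Finset.sum_add_distrib]
        map_smul' := by intro c a; simp [Finset.mul_sum, mul_comm, mul_left_comm] }
    let A : (Fin n → ℝ) →ᵃ[ℝ] ℝ := ⟨fun θ' => L θ' - d k, L, by
      intro p v; simp [map_add]; ring⟩
    have := hsq.comp_affineMap A
    simpa [A, L, Set.preimage_univ, Function.comp_def] using this
end

section
/- The information matrix after the directional-forgetting update satisfies the lower bound R(k) ⪰ μ R(k−1) in the Loewner order, where R(k) = (I − M(k))R(k−1) + φφᵀ, M(k) = (1−μ)R(k−1)φφᵀ/(φᵀR(k−1)φ), μ ∈ (0,1], and φ ≠ 0. -/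
open Matrix

private lemma vecMulVec_mulVec' {n : ℕ} (u v x : Fin n → ℝ) :
    vecMulVec u v *ᵥ x = (v ⬝ᵥ x) • u := by
  ext i
  simp [mulVec, vecMulVec_apply, dotProduct, Finset.mul_sum, mul_assoc, mul_comm, mul_left_comm]

private lemma vecMulVec_mul' {n : ℕ} (u v : Fin n → ℝ) (R : Matrix (Fin n) (Fin n) ℝ) :
    vecMulVec u v * R = vecMulVec u (v ᵥ* R) := by
  ext i j
  simp [mul_apply, vecMulVec_apply, vecMul, dotProduct, Finset.mul_sum, mul_assoc]

private lemma vecMulVec_self_herm {n : ℕ} (u : Fin n → ℝ) :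
    (vecMulVec u u).IsHermitian := by
  ext i j
  simp [vecMulVec_apply, mul_comm]

/-- directional forgetting lower bound R(k) ⪰ μ R(k−1). -/
theorem stmt_11 {n : ℕ} (R : Matrix (Fin n) (Fin n) ℝ) (hR : R.PosDef)
    (μ : ℝ) (hμ : μ ∈ Set.Ioc (0 : ℝ) 1)
    (φ : Fin n → ℝ) (hφ : φ ≠ 0)
    (M : Matrix (Fin n) (Fin n) ℝ)
    (hM : M = ((1 - μ) / (φ ⬝ᵥ R *ᵥ φ)) • vecMulVec (R *ᵥ φ) φ)
    (Rk : Matrix (Fin n) (Fin n) ℝ)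
    (hRk : Rk = (1 - M) * R + vecMulVec φ φ) :
    (Rk - μ • R).PosSemidef := by
  obtain ⟨hμ0, hμ1⟩ := hμ
  set w : Fin n → ℝ := R *ᵥ φ with hw
  set s : ℝ := φ ⬝ᵥ R *ᵥ φ with hs
  have hRsym : Rᵀ = R := hR.isHermitian
  have hvm : φ ᵥ* R = w := by rw [← hRsym, vecMul_transpose]
  have hs0 : 0 < s := by
    have := hR.dotProduct_mulVec_pos hφ
    simpa [hs] using this
  set c : ℝ := (1 - μ) / s with hc
  have hc0 : 0 ≤ c := div_nonneg (by linarith) hs0.le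
  have hMR : M * R = c • vecMulVec w w := by
    rw [hM, smul_mul, vecMulVec_mul', hvm]
  have hE : Rk - μ • R = R - c • vecMulVec w w + vecMulVec φ φ - μ • R := by
    rw [hRk, sub_mul, one_mul, hMR]
  rw [hE]
  have hsym2 : ∀ i j, R j i = R i j := fun i j => by
    conv_lhs => rw [← hRsym, transpose_apply]
  refine PosSemidef.of_dotProduct_mulVec_nonneg ?_ ?_
  · ext i j
    simp [conjTranspose_apply, Matrix.sub_apply, Matrix.add_apply, Matrix.smul_apply, vecMulVec_apply,
      mul_comm, hsym2 i j]
  · intro x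
    have hstar : star x = x := by simp
    -- Cauchy–Schwarz via discriminant
    have key : (x ⬝ᵥ w) ^ 2 ≤ s * (x ⬝ᵥ R *ᵥ x) := by
      have hq : ∀ t : ℝ, 0 ≤ s * (t * t) + (2 * (x ⬝ᵥ w)) * t + x ⬝ᵥ R *ᵥ x := by
        intro t
        have h0 := hR.posSemidef.dotProduct_mulVec_nonneg (x + t • φ)
        have hφx : φ ⬝ᵥ R *ᵥ x = x ⬝ᵥ w := by
          rw [dotProduct_mulVec, hvm, dotProduct_comm]
        simp only [star_trivial, mulVec_add, mulVec_smul, dotProduct_add, add_dotProduct,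
          dotProduct_smul, smul_dotProduct, smul_eq_mul, hφx] at h0
        nlinarith [h0]
      have := discrim_le_zero hq
      rw [discrim] at this
      nlinarith [this]
    have hd : x ⬝ᵥ ((R - c • vecMulVec w w + vecMulVec φ φ - μ • R) *ᵥ x) =
        (1 - μ) * (x ⬝ᵥ R *ᵥ x) - c * (x ⬝ᵥ w) ^ 2 + (φ ⬝ᵥ x) ^ 2 := by
      simp only [sub_mulVec, add_mulVec, smul_mulVec, vecMulVec_mulVec',
        dotProduct_sub, dotProduct_add, dotProduct_smul, smul_eq_mul]
      rw [dotProduct_comm w x, dotProduct_comm x φ]; ring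
    rw [hstar, hd]
    have hRx : 0 ≤ x ⬝ᵥ R *ᵥ x := by
      have := hR.posSemidef.dotProduct_mulVec_nonneg x
      simpa using this
    have hcb : c * (x ⬝ᵥ w) ^ 2 ≤ (1 - μ) * (x ⬝ᵥ R *ᵥ x) := by
      rw [hc, div_mul_eq_mul_div, div_le_iff₀ hs0]
      nlinarith [key]
    nlinarith [sq_nonneg (φ ⬝ᵥ x)]
end
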